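/- Let Θ : ℝ⁸ → ℝ be smooth, set ω_{ik} = Θ_{x^i y^k} − Θ_{x^k y^i}, let λ ∈ ℝ and D_m = ∂/∂y^m − λ ∂/∂x^m, and define A^{lm} = Σ_{i,k} ε^{iklm} ω_{ik}. Then the vector fields A^{lm} D_m are divergence-free, i.e. Σ_m D_m A^{lm} = 0 for each fixed l = 1,…,4; consequently, for every smooth ψ : ℝ⁸ → ℝ, the full compatibility identity Σ_{l} D_l ( Σ_{i,k,m} ε^{iklm} ω_{ik} D_m ψ ) = 0 holds at every point. -/

import Mathlib

noncomputable section

/-- Partial derivative of `f : ℝⁿ → ℝ` in the `i`-th coordinate direction. -/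
def pd {n : ℕ} (i : Fin n) (f : (Fin n → ℝ) → ℝ) : (Fin n → ℝ) → ℝ :=
  fun p => fderiv ℝ f p (Pi.single i 1)

/-- `∂/∂x^i` on functions of `(x¹,…,x⁴,y¹,…,y⁴) ∈ ℝ⁸`. -/
def px (i : Fin 4) (f : (Fin 8 → ℝ) → ℝ) : (Fin 8 → ℝ) → ℝ :=
  pd ⟨i.val, by omega⟩ f

/-- `∂/∂y^i` on functions of `(x¹,…,x⁴,y¹,…,y⁴) ∈ ℝ⁸`. -/
def py (i : Fin 4) (f : (Fin 8 → ℝ) → ℝ) : (Fin 8 → ℝ) → ℝ :=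
  pd ⟨i.val + 4, by omega⟩ f

/-- The operator `D_m = ∂/∂y^m − λ ∂/∂x^m`. -/
def Dop (lam : ℝ) (m : Fin 4) (f : (Fin 8 → ℝ) → ℝ) : (Fin 8 → ℝ) → ℝ :=
  fun p => py m f p - lam * px m f p

/-- Levi-Civita symbol on indices `1,…,4`. -/
def eps4 (i k l m : Fin 4) : ℝ :=
  Matrix.det (Matrix.of fun r c : Fin 4 => if (![i, k, l, m]) r = c then (1 : ℝ) else 0)

/-- `ω_{ik} = Θ_{x^i y^k} − Θ_{x^k y^i}`. -/
def omg (Θ : (Fin 8 → ℝ) → ℝ) (i k : Fin 4) : (Fin 8 → ℝ) → ℝ :=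
  fun p => px i (py k Θ) p - px k (py i Θ) p

/-- `A^{lm} = Σ_{i,k} ε^{iklm} ω_{ik}`. -/
def Amat (Θ : (Fin 8 → ℝ) → ℝ) (l m : Fin 4) : (Fin 8 → ℝ) → ℝ :=
  fun p => ∑ i, ∑ k, eps4 i k l m * omg Θ i k p

/-! ### Auxiliary lemmas -/

section Aux

variable {n : ℕ}

lemma cdiff {f : (Fin n → ℝ) → ℝ} (h : ContDiff ℝ (⊤:ℕ∞) f) (p : Fin n → ℝ) :
    DifferentiableAt ℝ f p := (h.differentiable (by simp)).differentiableAt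

lemma pd_contDiff {f : (Fin n → ℝ) → ℝ} (hf : ContDiff ℝ (⊤:ℕ∞) f) (i : Fin n) :
    ContDiff ℝ (⊤:ℕ∞) (pd i f) := by
  have h : ContDiff ℝ (⊤:ℕ∞) (fderiv ℝ f) := hf.fderiv_right (by simp)
  exact h.clm_apply contDiff_const

lemma pd_comm {f : (Fin n → ℝ) → ℝ} (hf : ContDiff ℝ (⊤:ℕ∞) f) (i j : Fin n)
    (p : Fin n → ℝ) : pd i (pd j f) p = pd j (pd i f) p := by
  have hdf : DifferentiableAt ℝ (fderiv ℝ f) p :=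
    ((hf.fderiv_right (m := (⊤:ℕ∞)) (by simp)).differentiable (by simp)).differentiableAt
  have key : ∀ a b : Fin n, pd a (pd b f) p
      = fderiv ℝ (fderiv ℝ f) p (Pi.single a 1) (Pi.single b 1) := by
    intro a b
    show fderiv ℝ (fun q => (fderiv ℝ f q) (Pi.single b 1)) p (Pi.single a 1) = _
    rw [fderiv_clm_apply hdf (differentiableAt_const _)]
    simp
  rw [key, key]
  exact (hf.contDiffAt.isSymmSndFDerivAt
    (by rw [minSmoothness_of_isRCLikeNormedField, show ((2:WithTop ℕ∞)) = ((2:ℕ∞):WithTop ℕ∞) by norm_cast];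
        exact WithTop.coe_le_coe.mpr le_top)) _ _

lemma pd_comm_fun {f : (Fin n → ℝ) → ℝ} (hf : ContDiff ℝ (⊤:ℕ∞) f) (i j : Fin n) :
    pd i (pd j f) = pd j (pd i f) := funext (pd_comm hf i j)

lemma pd_comm3_12 {f : (Fin n → ℝ) → ℝ} (hf : ContDiff ℝ (⊤:ℕ∞) f) (a b c : Fin n)
    (p : Fin n → ℝ) : pd a (pd b (pd c f)) p = pd b (pd a (pd c f)) p :=
  pd_comm (pd_contDiff hf c) a b p

lemma pd_comm3_13 {f : (Fin n → ℝ) → ℝ} (hf : ContDiff ℝ (⊤:ℕ∞) f) (a b c : Fin n)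
    (p : Fin n → ℝ) : pd a (pd b (pd c f)) p = pd c (pd b (pd a f)) p := by
  rw [pd_comm_fun hf b c, pd_comm (pd_contDiff hf b) a c p, pd_comm_fun hf a b]

lemma pd_sub {f g : (Fin n → ℝ) → ℝ} {p : Fin n → ℝ} (hf : DifferentiableAt ℝ f p)
    (hg : DifferentiableAt ℝ g p) (i : Fin n) :
    pd i (fun q => f q - g q) p = pd i f p - pd i g p := by
  unfold pd; rw [fderiv_fun_sub hf hg]; simp

lemma pd_const_mul {f : (Fin n → ℝ) → ℝ} {p : Fin n → ℝ} (hf : DifferentiableAt ℝ f p)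
    (c : ℝ) (i : Fin n) : pd i (fun q => c * f q) p = c * pd i f p := by
  unfold pd; rw [fderiv_const_mul hf]; simp

lemma pd_mul {f g : (Fin n → ℝ) → ℝ} {p : Fin n → ℝ} (hf : DifferentiableAt ℝ f p)
    (hg : DifferentiableAt ℝ g p) (i : Fin n) :
    pd i (fun q => f q * g q) p = pd i f p * g p + f p * pd i g p := by
  unfold pd; rw [fderiv_fun_mul hf hg]; simp; ring

lemma pd_sum {α : Type*} {s : Finset α} {F : α → (Fin n → ℝ) → ℝ} {p : Fin n → ℝ}
    (h : ∀ a ∈ s, DifferentiableAt ℝ (F a) p) (i : Fin n) :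
    pd i (fun q => ∑ a ∈ s, F a q) p = ∑ a ∈ s, pd i (F a) p := by
  unfold pd; rw [fderiv_fun_sum h]; simp

lemma sum_antisymm {c g : Fin 4 → Fin 4 → ℝ} (hc : ∀ a b, c b a = - c a b)
    (hg : ∀ a b, g a b = g b a) : ∑ a, ∑ b, c a b * g a b = 0 := by
  have h : (∑ a, ∑ b, c a b * g a b) = ∑ a, ∑ b, -(c a b * g a b) := by
    rw [Finset.sum_comm]
    exact Finset.sum_congr rfl fun a _ => Finset.sum_congr rfl fun b _ => by
      rw [hc, hg]; ring
  simp only [Finset.sum_neg_distrib] at h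
  linarith

lemma sum3_rot (F : Fin 4 → Fin 4 → Fin 4 → ℝ) :
    ∑ a, ∑ b, ∑ c, F a b c = ∑ b, ∑ c, ∑ a, F a b c := by
  rw [Finset.sum_comm]
  exact Finset.sum_congr rfl fun b _ => Finset.sum_comm

lemma sum3_swap13 (F : Fin 4 → Fin 4 → Fin 4 → ℝ) :
    ∑ a, ∑ b, ∑ c, F a b c = ∑ c, ∑ b, ∑ a, F a b c := by
  have h1 : ∑ a, ∑ b, ∑ c, F a b c = ∑ a, ∑ c, ∑ b, F a b c :=
    Finset.sum_congr rfl fun a _ => Finset.sum_comm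
  rw [h1, Finset.sum_comm]
  exact Finset.sum_congr rfl fun c _ => Finset.sum_comm

lemma eps4_eq_perm (i k l m i' k' l' m' : Fin 4) (σ : Equiv.Perm (Fin 4))
    (h : ∀ r, (![i,k,l,m]) (σ r) = (![i',k',l',m']) r) :
    eps4 i' k' l' m' = ((Equiv.Perm.sign σ : ℤ) : ℝ) * eps4 i k l m := by
  unfold eps4
  have hdp := Matrix.det_permute σ
    (Matrix.of fun r c : Fin 4 => if (![i,k,l,m]) r = c then (1:ℝ) else 0)
  have heq : Matrix.of (fun r c : Fin 4 => if (![i',k',l',m']) r = c then (1:ℝ) else 0)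
      = (Matrix.of fun r c : Fin 4 => if (![i,k,l,m]) r = c then (1:ℝ) else 0).submatrix σ id := by
    ext r c; simp [Matrix.submatrix_apply, h r]
  rw [heq, hdp]

lemma eps4_swapIK (i k l m : Fin 4) : eps4 k i l m = - eps4 i k l m := by
  have h := eps4_eq_perm i k l m k i l m (Equiv.swap 0 1)
    (by intro r; fin_cases r <;> simp [Equiv.swap_apply_def])
  rw [h, Equiv.Perm.sign_swap (by decide)]; norm_num

lemma eps4_swapIM (i k l m : Fin 4) : eps4 m k l i = - eps4 i k l m := by
  have h := eps4_eq_perm i k l m m k l i (Equiv.swap 0 3)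
    (by intro r; fin_cases r <;> simp [Equiv.swap_apply_def])
  rw [h, Equiv.Perm.sign_swap (by decide)]; norm_num

lemma eps4_swapKM (i k l m : Fin 4) : eps4 i m l k = - eps4 i k l m := by
  have h := eps4_eq_perm i k l m i m l k (Equiv.swap 1 3)
    (by intro r; fin_cases r <;> simp [Equiv.swap_apply_def])
  rw [h, Equiv.Perm.sign_swap (by decide)]; norm_num

lemma eps4_swapLM (i k l m : Fin 4) : eps4 i k m l = - eps4 i k l m := by
  have h := eps4_eq_perm i k l m i k m l (Equiv.swap 2 3)
    (by intro r; fin_cases r <;> simp [Equiv.swap_apply_def])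
  rw [h, Equiv.Perm.sign_swap (by decide)]; norm_num

end Aux

/-- abbreviation for the `x`-coordinate index -/
def Xc (i : Fin 4) : Fin 8 := ⟨i.val, by omega⟩
/-- abbreviation for the `y`-coordinate index -/
def Yc (i : Fin 4) : Fin 8 := ⟨i.val + 4, by omega⟩

lemma px_eq (i : Fin 4) (f : (Fin 8 → ℝ) → ℝ) : px i f = pd (Xc i) f := rfl
lemma py_eq (i : Fin 4) (f : (Fin 8 → ℝ) → ℝ) : py i f = pd (Yc i) f := rfl

section Smooth

variable {Θ f g : (Fin 8 → ℝ) → ℝ} {lam : ℝ}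

lemma omg_cd (hΘ : ContDiff ℝ (⊤:ℕ∞) Θ) (i k : Fin 4) : ContDiff ℝ (⊤:ℕ∞) (omg Θ i k) := by
  unfold omg px py
  exact (pd_contDiff (pd_contDiff hΘ _) _).sub (pd_contDiff (pd_contDiff hΘ _) _)

lemma Amat_cd (hΘ : ContDiff ℝ (⊤:ℕ∞) Θ) (l m : Fin 4) : ContDiff ℝ (⊤:ℕ∞) (Amat Θ l m) := by
  unfold Amat
  exact ContDiff.sum fun i _ => ContDiff.sum fun k _ => contDiff_const.mul (omg_cd hΘ i k)

lemma Dop_cd (hf : ContDiff ℝ (⊤:ℕ∞) f) (lam : ℝ) (m : Fin 4) :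
    ContDiff ℝ (⊤:ℕ∞) (Dop lam m f) := by
  unfold Dop px py
  exact (pd_contDiff hf _).sub (contDiff_const.mul (pd_contDiff hf _))

lemma Dop_sub {p : Fin 8 → ℝ} (hf : DifferentiableAt ℝ f p) (hg : DifferentiableAt ℝ g p)
    (lam : ℝ) (m : Fin 4) :
    Dop lam m (fun q => f q - g q) p = Dop lam m f p - Dop lam m g p := by
  unfold Dop px py; rw [pd_sub hf hg, pd_sub hf hg]; ring

lemma Dop_const_mul {p : Fin 8 → ℝ} (hf : DifferentiableAt ℝ f p) (c lam : ℝ) (m : Fin 4) :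
    Dop lam m (fun q => c * f q) p = c * Dop lam m f p := by
  unfold Dop px py; rw [pd_const_mul hf, pd_const_mul hf]; ring

lemma Dop_mul {p : Fin 8 → ℝ} (hf : DifferentiableAt ℝ f p) (hg : DifferentiableAt ℝ g p)
    (lam : ℝ) (m : Fin 4) :
    Dop lam m (fun q => f q * g q) p = Dop lam m f p * g p + f p * Dop lam m g p := by
  unfold Dop px py; rw [pd_mul hf hg, pd_mul hf hg]; ring

lemma Dop_sum {α : Type*} {s : Finset α} {F : α → (Fin 8 → ℝ) → ℝ} {p : Fin 8 → ℝ}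
    (h : ∀ a ∈ s, DifferentiableAt ℝ (F a) p) (lam : ℝ) (m : Fin 4) :
    Dop lam m (fun q => ∑ a ∈ s, F a q) p = ∑ a ∈ s, Dop lam m (F a) p := by
  unfold Dop px py
  rw [pd_sum h, pd_sum h, Finset.mul_sum, ← Finset.sum_sub_distrib]

end Smooth

section Main

variable {Θ : (Fin 8 → ℝ) → ℝ}

/-- Expansion of `Dop` applied to `omg`. -/
lemma Dop_omg (hΘ : ContDiff ℝ (⊤:ℕ∞) Θ) (lam : ℝ) (i k m : Fin 4) (p : Fin 8 → ℝ) :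
    Dop lam m (omg Θ i k) p
      = pd (Yc m) (pd (Xc i) (pd (Yc k) Θ)) p - pd (Yc m) (pd (Xc k) (pd (Yc i) Θ)) p
        - lam * pd (Xc m) (pd (Xc i) (pd (Yc k) Θ)) p
        + lam * pd (Xc m) (pd (Xc k) (pd (Yc i) Θ)) p := by
  have h1 : DifferentiableAt ℝ (pd (Xc i) (pd (Yc k) Θ)) p :=
    cdiff (pd_contDiff (pd_contDiff hΘ _) _) p
  have h2 : DifferentiableAt ℝ (pd (Xc k) (pd (Yc i) Θ)) p :=
    cdiff (pd_contDiff (pd_contDiff hΘ _) _) p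
  unfold Dop omg px py
  rw [show (⟨(i:ℕ), by omega⟩ : Fin 8) = Xc i from rfl]
  rw [show (⟨(k:ℕ), by omega⟩ : Fin 8) = Xc k from rfl]
  rw [show (⟨(i:ℕ)+4, by omega⟩ : Fin 8) = Yc i from rfl]
  rw [show (⟨(k:ℕ)+4, by omega⟩ : Fin 8) = Yc k from rfl]
  rw [show (⟨(m:ℕ)+4, by omega⟩ : Fin 8) = Yc m from rfl]
  rw [show (⟨(m:ℕ), by omega⟩ : Fin 8) = Xc m from rfl]
  rw [pd_sub h1 h2, pd_sub h1 h2]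
  ring

/-- Part 1: the divergence-free property. -/
lemma divFree (hΘ : ContDiff ℝ (⊤:ℕ∞) Θ) (lam : ℝ) (l : Fin 4) (p : Fin 8 → ℝ) :
    ∑ m, Dop lam m (Amat Θ l m) p = 0 := by
  have hωd : ∀ i k : Fin 4, ∀ q, DifferentiableAt ℝ (omg Θ i k) q :=
    fun i k q => cdiff (omg_cd hΘ i k) q
  have step1 : ∀ m : Fin 4, Dop lam m (Amat Θ l m) p
      = ∑ i, ∑ k, eps4 i k l m * Dop lam m (omg Θ i k) p := by
    intro m
    have h1 : Dop lam m (Amat Θ l m) p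
        = ∑ i, Dop lam m (fun q => ∑ k, eps4 i k l m * omg Θ i k q) p := by
      refine Dop_sum (fun i _ => ?_) lam m
      exact cdiff (ContDiff.sum fun k _ => contDiff_const.mul (omg_cd hΘ i k)) p
    rw [h1]
    refine Finset.sum_congr rfl fun i _ => ?_
    have h2 : Dop lam m (fun q => ∑ k, eps4 i k l m * omg Θ i k q) p
        = ∑ k, Dop lam m (fun q => eps4 i k l m * omg Θ i k q) p := by
      refine Dop_sum (fun k _ => ?_) lam m
      exact cdiff (contDiff_const.mul (omg_cd hΘ i k)) p
    rw [h2]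
    exact Finset.sum_congr rfl fun k _ => Dop_const_mul (hωd i k p) _ lam m
  calc ∑ m, Dop lam m (Amat Θ l m) p
      = ∑ m, ∑ i, ∑ k, eps4 i k l m * Dop lam m (omg Θ i k) p :=
        Finset.sum_congr rfl fun m _ => step1 m
    _ = ∑ m, ∑ i, ∑ k,
          (eps4 i k l m * pd (Yc m) (pd (Xc i) (pd (Yc k) Θ)) p
           - eps4 i k l m * pd (Yc m) (pd (Xc k) (pd (Yc i) Θ)) p
           - lam * (eps4 i k l m * pd (Xc m) (pd (Xc i) (pd (Yc k) Θ)) p)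
           + lam * (eps4 i k l m * pd (Xc m) (pd (Xc k) (pd (Yc i) Θ)) p)) := by
        refine Finset.sum_congr rfl fun m _ => Finset.sum_congr rfl fun i _ =>
          Finset.sum_congr rfl fun k _ => ?_
        rw [Dop_omg hΘ lam i k m p]; ring
    _ = (∑ m, ∑ i, ∑ k, eps4 i k l m * pd (Yc m) (pd (Xc i) (pd (Yc k) Θ)) p)
        - (∑ m, ∑ i, ∑ k, eps4 i k l m * pd (Yc m) (pd (Xc k) (pd (Yc i) Θ)) p)
        - lam * (∑ m, ∑ i, ∑ k, eps4 i k l m * pd (Xc m) (pd (Xc i) (pd (Yc k) Θ)) p)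
        + lam * (∑ m, ∑ i, ∑ k, eps4 i k l m * pd (Xc m) (pd (Xc k) (pd (Yc i) Θ)) p) := by
        simp only [Finset.sum_add_distrib, Finset.sum_sub_distrib, Finset.mul_sum]
    _ = 0 := by
        have S1 : (∑ m, ∑ i, ∑ k, eps4 i k l m * pd (Yc m) (pd (Xc i) (pd (Yc k) Θ)) p) = 0 := by
          rw [sum3_rot]
          refine Finset.sum_eq_zero fun i _ => ?_
          refine sum_antisymm (c := fun k m => eps4 i k l m)
            (g := fun k m => pd (Yc m) (pd (Xc i) (pd (Yc k) Θ)) p)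
            (fun a b => eps4_swapKM i a l b) (fun a b => ?_)
          exact (pd_comm3_13 hΘ (Yc b) (Xc i) (Yc a) p)
        have S2 : (∑ m, ∑ i, ∑ k, eps4 i k l m * pd (Yc m) (pd (Xc k) (pd (Yc i) Θ)) p) = 0 := by
          rw [sum3_swap13]
          refine Finset.sum_eq_zero fun k _ => ?_
          refine sum_antisymm (c := fun i m => eps4 i k l m)
            (g := fun i m => pd (Yc m) (pd (Xc k) (pd (Yc i) Θ)) p)
            (fun a b => eps4_swapIM a k l b) (fun a b => ?_)
          exact (pd_comm3_13 hΘ (Yc b) (Xc k) (Yc a) p)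
        have S3 : (∑ m, ∑ i, ∑ k, eps4 i k l m * pd (Xc m) (pd (Xc i) (pd (Yc k) Θ)) p) = 0 := by
          rw [sum3_swap13]
          refine Finset.sum_eq_zero fun k _ => ?_
          refine sum_antisymm (c := fun i m => eps4 i k l m)
            (g := fun i m => pd (Xc m) (pd (Xc i) (pd (Yc k) Θ)) p)
            (fun a b => eps4_swapIM a k l b) (fun a b => ?_)
          exact (pd_comm3_12 hΘ (Xc b) (Xc a) (Yc k) p)
        have S4 : (∑ m, ∑ i, ∑ k, eps4 i k l m * pd (Xc m) (pd (Xc k) (pd (Yc i) Θ)) p) = 0 := by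
          rw [sum3_rot]
          refine Finset.sum_eq_zero fun i _ => ?_
          refine sum_antisymm (c := fun k m => eps4 i k l m)
            (g := fun k m => pd (Xc m) (pd (Xc k) (pd (Yc i) Θ)) p)
            (fun a b => eps4_swapKM i a l b) (fun a b => ?_)
          exact (pd_comm3_12 hΘ (Xc b) (Xc a) (Yc i) p)
        rw [S1, S2, S3, S4]; ring

/-- `Amat` is antisymmetric. -/
lemma Amat_antisymm (Θ : (Fin 8 → ℝ) → ℝ) (l m : Fin 4) :
    Amat Θ l m = fun q => (-1 : ℝ) * Amat Θ m l q := by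
  funext q
  unfold Amat
  rw [Finset.mul_sum]
  refine Finset.sum_congr rfl fun i _ => ?_
  rw [Finset.mul_sum]
  refine Finset.sum_congr rfl fun k _ => ?_
  rw [eps4_swapLM i k m l]; ring

/-- Expansion of the double `Dop`. -/
lemma Dop_Dop {ψ : (Fin 8 → ℝ) → ℝ} (hψ : ContDiff ℝ (⊤:ℕ∞) ψ) (lam : ℝ) (l m : Fin 4)
    (p : Fin 8 → ℝ) :
    Dop lam l (Dop lam m ψ) p
      = pd (Yc l) (pd (Yc m) ψ) p - lam * pd (Yc l) (pd (Xc m) ψ) p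
        - lam * pd (Xc l) (pd (Yc m) ψ) p + lam * lam * pd (Xc l) (pd (Xc m) ψ) p := by
  have h1 : DifferentiableAt ℝ (pd (Yc m) ψ) p := cdiff (pd_contDiff hψ _) p
  have h2 : DifferentiableAt ℝ (fun q => lam * pd (Xc m) ψ q) p :=
    (cdiff (pd_contDiff hψ (Xc m)) p).const_mul lam
  have h3 : DifferentiableAt ℝ (pd (Xc m) ψ) p := cdiff (pd_contDiff hψ _) p
  show pd (Yc l) (fun q => pd (Yc m) ψ q - lam * pd (Xc m) ψ q) p
      - lam * pd (Xc l) (fun q => pd (Yc m) ψ q - lam * pd (Xc m) ψ q) p = _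
  rw [pd_sub h1 h2, pd_sub h1 h2, pd_const_mul h3, pd_const_mul h3]
  ring

lemma Dop_Dop_symm {ψ : (Fin 8 → ℝ) → ℝ} (hψ : ContDiff ℝ (⊤:ℕ∞) ψ) (lam : ℝ) (l m : Fin 4)
    (p : Fin 8 → ℝ) : Dop lam l (Dop lam m ψ) p = Dop lam m (Dop lam l ψ) p := by
  rw [Dop_Dop hψ lam l m p, Dop_Dop hψ lam m l p,
    pd_comm hψ (Yc l) (Yc m) p, pd_comm hψ (Yc l) (Xc m) p,
    pd_comm hψ (Xc l) (Yc m) p, pd_comm hψ (Xc l) (Xc m) p]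
  ring

end Main

/-- the vector fields `A^{lm} D_m` are divergence free, `Σ_m D_m A^{lm} = 0`, and
consequently `Σ_l D_l ( Σ_{i,k,m} ε^{iklm} ω_{ik} D_m ψ ) = 0` at every point
for every smooth `ψ`. -/
theorem stmt2 (Θ : (Fin 8 → ℝ) → ℝ) (hΘ : ContDiff ℝ (⊤ : ℕ∞) Θ) (lam : ℝ) :
    (∀ l : Fin 4, ∀ p : Fin 8 → ℝ, ∑ m, Dop lam m (Amat Θ l m) p = 0) ∧
    (∀ ψ : (Fin 8 → ℝ) → ℝ, ContDiff ℝ (⊤ : ℕ∞) ψ →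
      ∀ p : Fin 8 → ℝ,
        ∑ l, Dop lam l
            (fun q => ∑ i, ∑ k, ∑ m, eps4 i k l m * omg Θ i k q * Dop lam m ψ q) p = 0) := by
  refine ⟨fun l p => divFree hΘ lam l p, fun ψ hψ p => ?_⟩
  -- rewrite the inner function as `∑ m, Amat Θ l m q * Dop lam m ψ q`
  have hrw : ∀ l : Fin 4,
      (fun q => ∑ i, ∑ k, ∑ m, eps4 i k l m * omg Θ i k q * Dop lam m ψ q)
        = fun q => ∑ m, Amat Θ l m q * Dop lam m ψ q := by
    intro l; funext q
    rw [sum3_rot (fun i k m => eps4 i k l m * omg Θ i k q * Dop lam m ψ q)]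
    rw [sum3_rot (fun k m i => eps4 i k l m * omg Θ i k q * Dop lam m ψ q)]
    refine Finset.sum_congr rfl fun m _ => ?_
    unfold Amat
    rw [Finset.sum_mul]
    refine Finset.sum_congr rfl fun i _ => ?_
    rw [Finset.sum_mul]
  have hAd : ∀ l m : Fin 4, ∀ q, DifferentiableAt ℝ (Amat Θ l m) q :=
    fun l m q => cdiff (Amat_cd hΘ l m) q
  have hDd : ∀ m : Fin 4, ∀ q, DifferentiableAt ℝ (Dop lam m ψ) q :=
    fun m q => cdiff (Dop_cd hψ lam m) q
  have step : ∀ l : Fin 4,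
      Dop lam l (fun q => ∑ m, Amat Θ l m q * Dop lam m ψ q) p
        = ∑ m, (Dop lam l (Amat Θ l m) p * Dop lam m ψ p
            + Amat Θ l m p * Dop lam l (Dop lam m ψ) p) := by
    intro l
    have h1 : Dop lam l (fun q => ∑ m, Amat Θ l m q * Dop lam m ψ q) p
        = ∑ m, Dop lam l (fun q => Amat Θ l m q * Dop lam m ψ q) p :=
      Dop_sum (fun m _ => (hAd l m p).mul (hDd m p)) lam l
    rw [h1]
    exact Finset.sum_congr rfl fun m _ => Dop_mul (hAd l m p) (hDd m p) lam l
  calc ∑ l, Dop lam l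
        (fun q => ∑ i, ∑ k, ∑ m, eps4 i k l m * omg Θ i k q * Dop lam m ψ q) p
      = ∑ l, ∑ m, (Dop lam l (Amat Θ l m) p * Dop lam m ψ p
          + Amat Θ l m p * Dop lam l (Dop lam m ψ) p) := by
        refine Finset.sum_congr rfl fun l _ => ?_
        rw [hrw l]; exact step l
    _ = (∑ l, ∑ m, Dop lam l (Amat Θ l m) p * Dop lam m ψ p)
        + (∑ l, ∑ m, Amat Θ l m p * Dop lam l (Dop lam m ψ) p) := by
        simp only [Finset.sum_add_distrib]
    _ = 0 := by
        have T1 : (∑ l, ∑ m, Dop lam l (Amat Θ l m) p * Dop lam m ψ p) = 0 := by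
          rw [Finset.sum_comm]
          refine Finset.sum_eq_zero fun m _ => ?_
          rw [← Finset.sum_mul]
          have hz : (∑ l, Dop lam l (Amat Θ l m) p) = 0 := by
            have : ∀ l : Fin 4, Dop lam l (Amat Θ l m) p
                = (-1 : ℝ) * Dop lam l (Amat Θ m l) p := by
              intro l
              rw [Amat_antisymm Θ l m]
              exact Dop_const_mul (hAd m l p) (-1) lam l
            rw [Finset.sum_congr rfl fun l _ => this l, ← Finset.mul_sum,
              divFree hΘ lam m p]
            ring
          rw [hz, zero_mul]
        have T2 : (∑ l, ∑ m, Amat Θ l m p * Dop lam l (Dop lam m ψ) p) = 0 := by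
          refine sum_antisymm (c := fun l m => Amat Θ l m p)
            (g := fun l m => Dop lam l (Dop lam m ψ) p) (fun a b => ?_) (fun a b => ?_)
          · show Amat Θ b a p = - Amat Θ a b p
            have h := congrFun (Amat_antisymm Θ b a) p
            simpa using h
          · exact Dop_Dop_symm hψ lam a b p
        rw [T1, T2]; ring
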